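/- Consider the polynomial p(x) = 8x⁴ + x³ − 6x² − 5x + 2 over ℂ. Then p(1) = 0; every complex root z of p satisfies |z| ≤ 1; z = 1 is the only root of p of modulus 1; and z = 1 is a simple root of p. -/

import Mathlib

/-- The cubic cofactor `q(z) = 8z³ + 9z² + 3z − 2` of `p` has no root with `|z| ≥ 1`. -/
lemma fiveIFD_aux_q_root_lt_one (z : ℂ) (hq : 8 * z ^ 3 + 9 * z ^ 2 + 3 * z - 2 = 0) :
    ‖z‖ < 1 := by
  by_contra h
  push_neg at h
  -- key identity: 4096 z⁶ = −999 z² + 1419 z − 338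
  have key : (4096 : ℂ) * z ^ 6 = -999 * z ^ 2 + 1419 * z - 338 := by
    have : (4096 : ℂ) * z ^ 6 + 999 * z ^ 2 - 1419 * z + 338 =
        (512 * z ^ 3 - 576 * z ^ 2 + 456 * z - 169) * (8 * z ^ 3 + 9 * z ^ 2 + 3 * z - 2) := by
      ring
    rw [hq, mul_zero] at this
    linear_combination this
  set r : ℝ := ‖z‖ with hr
  have hr1 : (1 : ℝ) ≤ r := h
  have h2 : r ^ 2 ≤ r ^ 6 := pow_le_pow_right₀ hr1 (by norm_num)
  have h1 : r ≤ r ^ 6 := by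
    calc r = r ^ 1 := (pow_one r).symm
    _ ≤ r ^ 6 := pow_le_pow_right₀ hr1 (by norm_num)
  have habs : (4096 : ℝ) * r ^ 6 ≤ 999 * r ^ 2 + 1419 * r + 338 := by
    have c1 : ‖(4096 : ℂ)‖ = 4096 := by
      rw [Complex.norm_ofNat]
    have c2 : ‖(999 : ℂ)‖ = 999 := by
      rw [Complex.norm_ofNat]
    have c3 : ‖(1419 : ℂ)‖ = 1419 := by
      rw [Complex.norm_ofNat]
    have c4 : ‖(338 : ℂ)‖ = 338 := by
      rw [Complex.norm_ofNat]
    have lhs : ‖(4096 : ℂ) * z ^ 6‖ = 4096 * r ^ 6 := by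
      rw [norm_mul, norm_pow, c1, hr]
    have e1 : ‖-(999 : ℂ) * z ^ 2‖ = 999 * r ^ 2 := by
      rw [neg_mul, norm_neg, norm_mul, norm_pow, c2, hr]
    have e2 : ‖(1419 : ℂ) * z‖ = 1419 * r := by
      rw [norm_mul, c3, hr]
    have t1 : ‖-(999 : ℂ) * z ^ 2 + 1419 * z - 338‖
        ≤ ‖-(999 : ℂ) * z ^ 2 + 1419 * z‖ + ‖(338 : ℂ)‖ := by
      exact norm_sub_le _ _
    have t2 : ‖-(999 : ℂ) * z ^ 2 + 1419 * z‖
        ≤ ‖-(999 : ℂ) * z ^ 2‖ + ‖(1419 : ℂ) * z‖ :=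
      norm_add_le _ _
    have heq : ‖(4096 : ℂ) * z ^ 6‖
        = ‖-(999 : ℂ) * z ^ 2 + 1419 * z - 338‖ := by
      rw [key]
    rw [lhs] at heq
    rw [e1, e2] at t2
    rw [c4] at t1
    linarith [heq, t1, t2]
  have h338 : (338 : ℝ) ≤ 338 * r ^ 6 := by nlinarith
  nlinarith

/-- The characteristic polynomial `p(x) = 8x⁴ + x³ - 6x² - 5x + 2` of the 5-IFD
formula satisfies `p(1) = 0`; all its complex roots lie in the closed unit disk;
`1` is its only root of modulus one; and `1` is a simple root (`p′(1) ≠ 0`). -/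
theorem fiveIFD_characteristic_polynomial_convergent
    (p : ℂ → ℂ) (hp : ∀ x, p x = 8 * x ^ 4 + x ^ 3 - 6 * x ^ 2 - 5 * x + 2) :
    p 1 = 0 ∧
    (∀ z : ℂ, p z = 0 → ‖z‖ ≤ 1) ∧
    (∀ z : ℂ, p z = 0 → ‖z‖ = 1 → z = 1) ∧
    deriv p 1 ≠ 0 := by
  have hfac : ∀ z : ℂ, p z = (z - 1) * (8 * z ^ 3 + 9 * z ^ 2 + 3 * z - 2) := by
    intro z; rw [hp]; ring
  have hroot : ∀ z : ℂ, p z = 0 → z = 1 ∨ ‖z‖ < 1 := by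
    intro z hz
    rw [hfac] at hz
    rcases mul_eq_zero.mp hz with h | h
    · left; linear_combination h
    · right; exact fiveIFD_aux_q_root_lt_one z h
  refine ⟨by rw [hp]; ring, ?_, ?_, ?_⟩
  · intro z hz
    rcases hroot z hz with h | h
    · simp [h]
    · exact h.le
  · intro z hz habs
    rcases hroot z hz with h | h
    · exact h
    · rw [habs] at h; exact absurd h (lt_irrefl 1)
  · have hpe : p = fun x => 8 * x ^ 4 + x ^ 3 - 6 * x ^ 2 - 5 * x + 2 := funext hp
    rw [hpe]
    have hd : HasDerivAt (fun x : ℂ => 8 * x ^ 4 + x ^ 3 - 6 * x ^ 2 - 5 * x + 2)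
        (8 * (4 * 1 ^ 3) + 3 * 1 ^ 2 - 6 * (2 * 1) - 5) 1 := by
      have h1 : HasDerivAt (fun x : ℂ => x) 1 (1 : ℂ) := hasDerivAt_id 1
      simpa using (((((h1.pow 4).const_mul (8 : ℂ)).add (h1.pow 3)).sub
        ((h1.pow 2).const_mul (6 : ℂ))).sub (h1.const_mul (5 : ℂ))).add_const (2 : ℂ)
    rw [hd.deriv]
    norm_num
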